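/- Let d ≥ 2 and let G be a closed fractal subgroup of Aut T_d. If H is an open normal subgroup of G that is torsion (every element of H has finite order), then the self-similar closure of H in G is an open, normal, torsion subgroup of G. -/

import Mathlib

open scoped Pointwise

namespace TreeDyn

/-- Vertices of the `d`-regular rooted tree: finite words over `{0,…,d-1}`,
with the empty word as root and children of `w` the words `w ++ [x]`. -/
abbrev Vertex (d : ℕ) := List (Fin d)

/-- A function on words is length-preserving and prefix-preserving. -/
def LP (d : ℕ) (f : Vertex d → Vertex d) : Prop :=
  (∀ w : Vertex d, (f w).length = w.length) ∧
    ∀ v w : Vertex d, v <+: w → f v <+: f w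

theorem LP.id' (d : ℕ) : LP d id := ⟨fun _ => rfl, fun _ _ h => h⟩

theorem LP.comp {d : ℕ} {f g : Vertex d → Vertex d} (hf : LP d f) (hg : LP d g) :
    LP d (f ∘ g) :=
  ⟨fun w => (hf.1 (g w)).trans (hg.1 w), fun v w h => hf.2 _ _ (hg.2 _ _ h)⟩

/-- The automorphism group of the rooted `d`-regular tree, realized as the subgroup of
permutations of the vertex set which fix the root and preserve the child relation
(equivalently: length- and prefix-preserving permutations). -/
def treeAut (d : ℕ) : Subgroup (Equiv.Perm (Vertex d)) where
  carrier := {g | LP d ⇑g ∧ LP d ⇑g⁻¹}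
  one_mem' := ⟨LP.id' d, by simpa using LP.id' d⟩
  mul_mem' := by
    rintro a b ⟨ha1, ha2⟩ ⟨hb1, hb2⟩
    refine ⟨?_, ?_⟩
    · simpa [Equiv.Perm.coe_mul] using ha1.comp hb1
    · rw [mul_inv_rev]
      simpa [Equiv.Perm.coe_mul] using hb2.comp ha2
  inv_mem' := by
    rintro a ⟨h1, h2⟩
    exact ⟨h2, by simpa using h1⟩

/-- `Aut T_d`, the automorphism group of the `d`-regular rooted tree. -/
abbrev AutT (d : ℕ) := ↥(treeAut d)

namespace AutT

variable {d : ℕ}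

/-- The underlying permutation of the vertices. -/
def toPerm (g : AutT d) : Equiv.Perm (Vertex d) := g.1

theorem toPerm_mul (g h : AutT d) : (g * h).toPerm = g.toPerm * h.toPerm := rfl

theorem toPerm_inv (g : AutT d) : (g⁻¹).toPerm = (g.toPerm)⁻¹ := rfl

theorem toPerm_one : (1 : AutT d).toPerm = 1 := rfl

theorem length_apply (g : AutT d) (w : Vertex d) : (g.toPerm w).length = w.length :=
  g.2.1.1 w

theorem prefix_apply (g : AutT d) {v w : Vertex d} (h : v <+: w) :
    g.toPerm v <+: g.toPerm w :=
  g.2.1.2 v w h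

theorem take_apply (g : AutT d) (v u : Vertex d) :
    (g.toPerm (v ++ u)).take v.length = g.toPerm v := by
  have h : g.toPerm v <+: g.toPerm (v ++ u) := g.prefix_apply (List.prefix_append v u)
  have h2 := List.prefix_iff_eq_take.mp h
  rw [length_apply] at h2
  exact h2.symm

theorem apply_append (g : AutT d) (v u : Vertex d) :
    g.toPerm (v ++ u) = g.toPerm v ++ (g.toPerm (v ++ u)).drop v.length := by
  conv_lhs => rw [← List.take_append_drop v.length (g.toPerm (v ++ u))]
  rw [take_apply]

/-- The section function: the action of `g` on the subtree over `v`, transported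
to the whole tree. -/
def secFun (g : AutT d) (v : Vertex d) : Vertex d → Vertex d :=
  fun u => (g.toPerm (v ++ u)).drop v.length

theorem secFun_spec (g : AutT d) (v u : Vertex d) :
    g.toPerm (v ++ u) = g.toPerm v ++ secFun g v u :=
  apply_append g v u

theorem secFun_left (g : AutT d) (v u : Vertex d) :
    secFun g⁻¹ (g.toPerm v) (secFun g v u) = u := by
  have h1 := secFun_spec g⁻¹ (g.toPerm v) (secFun g v u)
  rw [← secFun_spec g v u] at h1
  rw [toPerm_inv] at h1
  simp only [Equiv.Perm.inv_def, Equiv.symm_apply_apply] at h1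
  exact (List.append_cancel_left h1).symm

theorem LP_secFun (g : AutT d) (v : Vertex d) : LP d (secFun g v) := by
  constructor
  · intro w
    simp only [secFun, List.length_drop, length_apply, List.length_append]
    omega
  · intro u1 u2 h
    have h2 : g.toPerm (v ++ u1) <+: g.toPerm (v ++ u2) := by
      refine g.prefix_apply ?_
      obtain ⟨t, ht⟩ := h
      exact ⟨t, by rw [List.append_assoc, ht]⟩
    exact h2.drop v.length

/-- The section of the tree automorphism `g` at the vertex `v`: the automorphism `g|_v` with
`g (v ++ u) = g v ++ g|_v u`. -/
def sec (g : AutT d) (v : Vertex d) : AutT d :=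
  ⟨{ toFun := secFun g v
     invFun := secFun g⁻¹ (g.toPerm v)
     left_inv := secFun_left g v
     right_inv := by
       intro u
       have h := secFun_left g⁻¹ (g.toPerm v) u
       rw [inv_inv] at h
       rw [toPerm_inv] at h
       simp only [Equiv.Perm.inv_def, Equiv.symm_apply_apply] at h
       exact h },
   by
     refine ⟨LP_secFun g v, ?_⟩
     have : ⇑(({ toFun := secFun g v
                 invFun := secFun g⁻¹ (g.toPerm v)
                 left_inv := secFun_left g v
                 right_inv := by
                   intro u
                   have h := secFun_left g⁻¹ (g.toPerm v) u
                   rw [inv_inv] at h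
                   rw [toPerm_inv] at h
                   simp only [Equiv.Perm.inv_def, Equiv.symm_apply_apply] at h
                   exact h } : Equiv.Perm (Vertex d))⁻¹) = secFun g⁻¹ (g.toPerm v) := rfl
     rw [this]
     exact LP_secFun g⁻¹ (g.toPerm v)⟩

theorem sec_apply (g : AutT d) (v u : Vertex d) :
    (sec g v).toPerm u = (g.toPerm (v ++ u)).drop v.length := rfl

end AutT

open AutT

/-- The stabilizer of the vertex `v` in `Aut T_d`. -/
def stabT (d : ℕ) (v : Vertex d) : Subgroup (AutT d) where
  carrier := {g | g.toPerm v = v}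
  one_mem' := rfl
  mul_mem' := by
    intro a b ha hb
    show (a * b).toPerm v = v
    rw [toPerm_mul, Equiv.Perm.mul_apply]
    rw [show b.toPerm v = v from hb, show a.toPerm v = v from ha]
  inv_mem' := by
    intro a ha
    show (a⁻¹).toPerm v = v
    rw [toPerm_inv]
    rw [Equiv.Perm.inv_eq_iff_eq]
    exact (show a.toPerm v = v from ha).symm

/-- The self-similarity homomorphism `π_v` from the stabilizer of `v` to `Aut T_d`,
`g ↦ g|_v`. -/
def secHom (d : ℕ) (v : Vertex d) : (stabT d v) →* AutT d where
  toFun g := sec g.1 v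
  map_one' := by
    apply Subtype.ext
    apply Equiv.ext
    intro u
    show ((1 : AutT d).toPerm (v ++ u)).drop v.length = (1 : AutT d).toPerm u
    rw [toPerm_one]
    simp [List.drop_left]
  map_mul' := by
    intro a b
    apply Subtype.ext
    apply Equiv.ext
    intro u
    have hb : (b.1).toPerm v = v := b.2
    show ((a.1 * b.1).toPerm (v ++ u)).drop v.length
        = (sec a.1 v).toPerm ((sec b.1 v).toPerm u)
    rw [toPerm_mul, Equiv.Perm.mul_apply]
    congr 1
    congr 1
    have h := secFun_spec b.1 v u
    rw [hb] at h
    exact h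

/-- The image subgroup `H^v = π_v(H_v)` of the stabilizer of `v` in `H` under the
self-similarity map. -/
def secSG (d : ℕ) (H : Subgroup (AutT d)) (v : Vertex d) : Subgroup (AutT d) :=
  (H.subgroupOf (stabT d v)).map (secHom d v)

/-- A subgroup of `Aut T_d` is self-similar if `H^v ≤ H` for every vertex `v`. -/
def IsSelfSimilar (d : ℕ) (H : Subgroup (AutT d)) : Prop :=
  ∀ v : Vertex d, secSG d H v ≤ H

/-- A subgroup of `Aut T_d` is fractal if `H^v = H` for every vertex `v`. -/
def IsFractal (d : ℕ) (H : Subgroup (AutT d)) : Prop :=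
  ∀ v : Vertex d, secSG d H v = H

end TreeDyn
namespace TreeDyn

open AutT

variable {d : ℕ}

instance : TopologicalSpace (Vertex d) := ⊥
instance : DiscreteTopology (Vertex d) := ⟨rfl⟩

/-- The profinite topology on `Aut T_d`: the topology of pointwise convergence on vertices. -/
instance : TopologicalSpace (AutT d) :=
  TopologicalSpace.induced (fun g : AutT d => (g.toPerm : Vertex d → Vertex d)) inferInstance

theorem continuous_toFun : Continuous fun g : AutT d => (g.toPerm : Vertex d → Vertex d) :=
  continuous_induced_dom

theorem continuous_ev (x : Vertex d) : Continuous fun g : AutT d => g.toPerm x :=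
  (continuous_apply x).comp continuous_toFun

instance : IsTopologicalGroup (AutT d) where
  continuous_mul := by
    apply continuous_induced_rng.2
    show Continuous fun p : AutT d × AutT d => ((p.1 * p.2).toPerm : Vertex d → Vertex d)
    apply continuous_pi
    intro x
    rw [continuous_discrete_rng]
    intro z
    have heq : ((fun p : AutT d × AutT d => (p.1 * p.2).toPerm x)) ⁻¹' {z}
        = ⋃ y : Vertex d, ((fun p : AutT d × AutT d => p.2.toPerm x) ⁻¹' {y})
            ∩ ((fun p : AutT d × AutT d => p.1.toPerm y) ⁻¹' {z}) := by
      ext p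
      simp only [Set.mem_preimage, Set.mem_singleton_iff, Set.mem_iUnion, Set.mem_inter_iff]
      constructor
      · intro h
        exact ⟨p.2.toPerm x, rfl, by rw [toPerm_mul, Equiv.Perm.mul_apply] at h; exact h⟩
      · rintro ⟨y, h1, h2⟩
        rw [toPerm_mul, Equiv.Perm.mul_apply, h1, h2]
    rw [heq]
    apply isOpen_iUnion
    intro y
    exact ((isOpen_discrete _).preimage ((continuous_ev x).comp continuous_snd)).inter
      ((isOpen_discrete _).preimage ((continuous_ev y).comp continuous_fst))
  continuous_inv := by
    apply continuous_induced_rng.2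
    show Continuous fun g : AutT d => ((g⁻¹).toPerm : Vertex d → Vertex d)
    apply continuous_pi
    intro x
    rw [continuous_discrete_rng]
    intro z
    have heq : (fun g : AutT d => (g⁻¹).toPerm x) ⁻¹' {z}
        = (fun g : AutT d => g.toPerm z) ⁻¹' {x} := by
      ext g
      simp only [Set.mem_preimage, Set.mem_singleton_iff]
      rw [toPerm_inv]
      exact Equiv.Perm.inv_eq_iff_eq.trans eq_comm
    rw [heq]
    exact (isOpen_discrete _).preimage (continuous_ev z)

end TreeDyn
namespace TreeDyn

open AutT

/-- `J` is the self-similar closure of `H` in `G`: the smallest closed self-similar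
subgroup of `G` containing `H`. -/
def IsSelfSimilarClosure (d : ℕ) (G H J : Subgroup (AutT d)) : Prop :=
  H ≤ J ∧ J ≤ G ∧ IsClosed (J : Set (AutT d)) ∧ IsSelfSimilar d J ∧
    ∀ J' : Subgroup (AutT d), H ≤ J' → J' ≤ G → IsClosed (J' : Set (AutT d)) →
      IsSelfSimilar d J' → J ≤ J'

/-- The pointwise stabilizer in `Aut T_d` of the vertices at level `m`. -/
def levelStab (d : ℕ) (m : ℕ) : Subgroup (AutT d) where
  carrier := {g | ∀ v : Vertex d, v.length = m → g.toPerm v = v}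
  one_mem' := fun _ _ => rfl
  mul_mem' := by
    intro a b ha hb v hv
    show (a * b).toPerm v = v
    rw [toPerm_mul, Equiv.Perm.mul_apply, hb v hv, ha v hv]
  inv_mem' := by
    intro a ha v hv
    show (a⁻¹).toPerm v = v
    rw [toPerm_inv, Equiv.Perm.inv_eq_iff_eq]
    exact (ha v hv).symm

/-- A topological group is pronilpotent if its quotient by every open normal subgroup
is nilpotent. -/
def Pronilpotent (G : Type*) [Group G] [TopologicalSpace G] : Prop :=
  ∀ (N : Subgroup G) [N.Normal], IsOpen (N : Set G) → Group.IsNilpotent (G ⧸ N)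

/-- A topological group is pro-`p` if its quotient by every open normal subgroup
is a `p`-group. -/
def IsProP (p : ℕ) (G : Type*) [Group G] [TopologicalSpace G] : Prop :=
  ∀ (N : Subgroup G) [N.Normal], IsOpen (N : Set G) → IsPGroup p (G ⧸ N)

/-- A topological group is prosolvable if its quotient by every open normal subgroup
is solvable. -/
def Prosolvable (G : Type*) [Group G] [TopologicalSpace G] : Prop :=
  ∀ (N : Subgroup G) [N.Normal], IsOpen (N : Set G) → IsSolvable (G ⧸ N)

/-- The Frattini subgroup of a topological group: the intersection of its
maximal open (proper) subgroups. -/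
def frattiniOpen (G : Type*) [Group G] [TopologicalSpace G] : Subgroup G :=
  sInf {M : Subgroup G | IsOpen (M : Set G) ∧ M ≠ ⊤ ∧
    ∀ M' : Subgroup G, IsOpen (M' : Set G) → M < M' → M' = ⊤}

end TreeDyn
namespace TreeDyn

open AutT

variable {d : ℕ}

/-- The cyclic successor on `Fin d`. -/
def succFin (x : Fin d) : Fin d :=
  ⟨(x.1 + 1) % d, Nat.mod_lt _ (Nat.lt_of_le_of_lt (Nat.zero_le _) x.2)⟩

/-- The cyclic predecessor on `Fin d`. -/
def predFin (x : Fin d) : Fin d :=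
  ⟨(x.1 + (d - 1)) % d, Nat.mod_lt _ (Nat.lt_of_le_of_lt (Nat.zero_le _) x.2)⟩

theorem predFin_succFin (x : Fin d) : predFin (succFin x) = x := by
  have hd : 0 < d := Nat.lt_of_le_of_lt (Nat.zero_le _) x.2
  apply Fin.ext
  show ((x.1 + 1) % d + (d - 1)) % d = x.1
  rw [Nat.mod_add_mod, show x.1 + 1 + (d - 1) = x.1 + d by omega, Nat.add_mod_right,
    Nat.mod_eq_of_lt x.2]

theorem succFin_predFin (x : Fin d) : succFin (predFin x) = x := by
  have hd : 0 < d := Nat.lt_of_le_of_lt (Nat.zero_le _) x.2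
  apply Fin.ext
  show ((x.1 + (d - 1)) % d + 1) % d = x.1
  rw [Nat.mod_add_mod, show x.1 + (d - 1) + 1 = x.1 + d by omega, Nat.add_mod_right,
    Nat.mod_eq_of_lt x.2]

theorem succFin_val_eq_zero_iff (x : Fin d) : (succFin x).1 = 0 ↔ x.1 + 1 = d := by
  show (x.1 + 1) % d = 0 ↔ x.1 + 1 = d
  by_cases h : x.1 + 1 = d
  · simp [h, Nat.mod_self]
  · rw [Nat.mod_eq_of_lt (by omega)]
    omega

theorem predFin_val_succ_eq_iff (x : Fin d) : (predFin x).1 + 1 = d ↔ x.1 = 0 := by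
  have hd : 0 < d := Nat.lt_of_le_of_lt (Nat.zero_le _) x.2
  show (x.1 + (d - 1)) % d + 1 = d ↔ x.1 = 0
  rcases Nat.eq_zero_or_pos x.1 with h | h
  · rw [h]
    simp only [Nat.zero_add]
    rw [Nat.mod_eq_of_lt (show d - 1 < d by omega)]
    simp only [iff_true, eq_self_iff_true]
    omega
  · rw [show x.1 + (d - 1) = (x.1 - 1) + d by omega, Nat.add_mod_right,
      Nat.mod_eq_of_lt (show x.1 - 1 < d by omega)]
    omega

/-- The odometer function: adds one with carrying, on words read root-first. -/
def odF (d : ℕ) : Vertex d → Vertex d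
  | [] => []
  | x :: u => succFin x :: (if x.1 + 1 = d then odF d u else u)

/-- The inverse odometer function. -/
def odG (d : ℕ) : Vertex d → Vertex d
  | [] => []
  | x :: u => predFin x :: (if x.1 = 0 then odG d u else u)

theorem odG_odF (u : Vertex d) : odG d (odF d u) = u := by
  induction u with
  | nil => rfl
  | cons x t ih =>
    simp only [odF, odG, predFin_succFin]
    by_cases h : x.1 + 1 = d
    · rw [if_pos h, if_pos ((succFin_val_eq_zero_iff x).mpr h), ih]
    · rw [if_neg h, if_neg (fun hc => h ((succFin_val_eq_zero_iff x).mp hc))]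

theorem odF_odG (u : Vertex d) : odF d (odG d u) = u := by
  induction u with
  | nil => rfl
  | cons x t ih =>
    simp only [odF, odG, succFin_predFin]
    by_cases h : x.1 = 0
    · rw [if_pos h, if_pos ((predFin_val_succ_eq_iff x).mpr h), ih]
    · rw [if_neg h, if_neg (fun hc => h ((predFin_val_succ_eq_iff x).mp hc))]

theorem odF_append (a b : Vertex d) :
    odF d (a ++ b) = odF d a ++ (if ∀ x ∈ a, x.1 + 1 = d then odF d b else b) := by
  induction a with
  | nil => simp [odF]
  | cons x t ih =>
    by_cases h : x.1 + 1 = d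
    · by_cases h2 : ∀ y ∈ t, y.1 + 1 = d
      · have hall : ∀ y ∈ x :: t, y.1 + 1 = d := by
          intro y hy
          rcases List.mem_cons.mp hy with rfl | hy
          · exact h
          · exact h2 y hy
        simp only [List.cons_append, List.append_eq, odF, if_pos h, if_pos h2, if_pos hall, ih]
      · have hall : ¬ ∀ y ∈ x :: t, y.1 + 1 = d :=
          fun hc => h2 fun y hy => hc y (List.mem_cons_of_mem x hy)
        simp only [List.cons_append, List.append_eq, odF, if_pos h, if_neg h2, if_neg hall, ih]
    · have hall : ¬ ∀ y ∈ x :: t, y.1 + 1 = d :=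
        fun hc => h (hc x List.mem_cons_self)
      simp only [List.cons_append, List.append_eq, odF, if_neg h, if_neg hall]

theorem odG_append (a b : Vertex d) :
    odG d (a ++ b) = odG d a ++ (if ∀ x ∈ a, x.1 = 0 then odG d b else b) := by
  induction a with
  | nil => simp [odG]
  | cons x t ih =>
    by_cases h : x.1 = 0
    · by_cases h2 : ∀ y ∈ t, y.1 = 0
      · have hall : ∀ y ∈ x :: t, y.1 = 0 := by
          intro y hy
          rcases List.mem_cons.mp hy with rfl | hy
          · exact h
          · exact h2 y hy
        simp only [List.cons_append, List.append_eq, odG, if_pos h, if_pos h2, if_pos hall, ih]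
      · have hall : ¬ ∀ y ∈ x :: t, y.1 = 0 :=
          fun hc => h2 fun y hy => hc y (List.mem_cons_of_mem x hy)
        simp only [List.cons_append, List.append_eq, odG, if_pos h, if_neg h2, if_neg hall, ih]
    · have hall : ¬ ∀ y ∈ x :: t, y.1 = 0 :=
        fun hc => h (hc x List.mem_cons_self)
      simp only [List.cons_append, List.append_eq, odG, if_neg h, if_neg hall]

theorem LP_odF : LP d (odF d) := by
  constructor
  · intro w
    induction w with
    | nil => rfl
    | cons x t ih =>
      simp only [odF]
      by_cases h : x.1 + 1 = d <;> simp [h, ih]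
  · intro v w h
    obtain ⟨t, rfl⟩ := h
    rw [odF_append]
    exact ⟨_, rfl⟩

theorem LP_odG : LP d (odG d) := by
  constructor
  · intro w
    induction w with
    | nil => rfl
    | cons x t ih =>
      simp only [odG]
      by_cases h : x.1 = 0 <;> simp [h, ih]
  · intro v w h
    obtain ⟨t, rfl⟩ := h
    rw [odG_append]
    exact ⟨_, rfl⟩

/-- The standard odometer as a permutation of the vertices. -/
def odPerm (d : ℕ) : Equiv.Perm (Vertex d) where
  toFun := odF d
  invFun := odG d
  left_inv := odG_odF
  right_inv := odF_odG

/-- The standard odometer `ω ∈ Aut T_d` (adds one to a `d`-adic digit string,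
with carrying). -/
def od (d : ℕ) : AutT d :=
  ⟨odPerm d, ⟨LP_odF, LP_odG⟩⟩

/-- The standard `d`-cycle `σ = (0 1 … d-1)` on the first level. -/
def sigmaFin (d : ℕ) : Equiv.Perm (Fin d) where
  toFun := succFin
  invFun := predFin
  left_inv := predFin_succFin
  right_inv := succFin_predFin

end TreeDyn

namespace TreeDyn

open AutT Topology

variable {d : ℕ}

/-! ### Auxiliary lemmas for the main theorem -/

theorem mem_secSG' {A : Subgroup (AutT d)} {v : Vertex d} {x : AutT d} :
    x ∈ secSG d A v ↔ ∃ g, g ∈ A ∧ ∃ _ : g ∈ stabT d v, sec g v = x := by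
  rw [secSG, Subgroup.mem_map]
  constructor
  · rintro ⟨y, hy, rfl⟩
    exact ⟨y.1, Subgroup.mem_subgroupOf.mp hy, y.2, rfl⟩
  · rintro ⟨g, hgA, hgs, rfl⟩
    exact ⟨⟨g, hgs⟩, Subgroup.mem_subgroupOf.mpr hgA, rfl⟩

theorem sec_mul' {v : Vertex d} {x y : AutT d} (hx : x ∈ stabT d v) (hy : y ∈ stabT d v) :
    sec (x * y) v = sec x v * sec y v :=
  map_mul (secHom d v) ⟨x, hx⟩ ⟨y, hy⟩

theorem sec_inv' {v : Vertex d} {x : AutT d} (hx : x ∈ stabT d v) :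
    sec x⁻¹ v = (sec x v)⁻¹ :=
  map_inv (secHom d v) ⟨x, hx⟩

theorem sec_conj' {v : Vertex d} {g a : AutT d} (hg : g ∈ stabT d v) (ha : a ∈ stabT d v) :
    sec (g * a * g⁻¹) v = sec g v * sec a v * (sec g v)⁻¹ := by
  rw [sec_mul' (mul_mem hg ha) (inv_mem hg), sec_mul' hg ha, sec_inv' hg]

theorem exists_sec_lift {G : Subgroup (AutT d)} (hG : IsFractal d G) (v : Vertex d)
    {g : AutT d} (hg : g ∈ G) : ∃ x, x ∈ G ∧ ∃ _ : x ∈ stabT d v, sec x v = g :=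
  mem_secSG'.mp ((hG v).symm ▸ hg)

theorem secSG_mono' {A B : Subgroup (AutT d)} (h : A ≤ B) (v : Vertex d) :
    secSG d A v ≤ secSG d B v := by
  intro x hx
  obtain ⟨g, hgA, hgs, rfl⟩ := mem_secSG'.mp hx
  exact mem_secSG'.mpr ⟨g, h hgA, hgs, rfl⟩

/-- One step of the self-similar closure construction. -/
def sstep (d : ℕ) (A : Subgroup (AutT d)) : Subgroup (AutT d) :=
  A ⊔ ⨆ v : Vertex d, secSG d A v

theorem le_sstep (A : Subgroup (AutT d)) : A ≤ sstep d A := le_sup_left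

theorem secSG_le_sstep (A : Subgroup (AutT d)) (v : Vertex d) :
    secSG d A v ≤ sstep d A :=
  le_sup_of_le_right (le_iSup _ v)

theorem sstep_le {A C : Subgroup (AutT d)} (h1 : A ≤ C) (h2 : ∀ v, secSG d A v ≤ C) :
    sstep d A ≤ C :=
  sup_le h1 (iSup_le h2)

/-- The chain of subgroups obtained by iterating `sstep` starting at `H`. -/
def sschain (d : ℕ) (H : Subgroup (AutT d)) : ℕ → Subgroup (AutT d)
  | 0 => H
  | n + 1 => sstep d (sschain d H n)

/-- The (abstract) self-similar closure: union of the chain. -/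
def ssK (d : ℕ) (H : Subgroup (AutT d)) : Subgroup (AutT d) := ⨆ n, sschain d H n

theorem sschain_mono (H : Subgroup (AutT d)) : Monotone (sschain d H) :=
  monotone_nat_of_le_succ fun n => le_sstep _

theorem mem_ssK {H : Subgroup (AutT d)} {x : AutT d} :
    x ∈ ssK d H ↔ ∃ n, x ∈ sschain d H n :=
  Subgroup.mem_iSup_of_directed (sschain_mono H).directed_le

theorem sschain_le {H C : Subgroup (AutT d)} (hHC : H ≤ C) (hC : ∀ v, secSG d C v ≤ C) :
    ∀ n, sschain d H n ≤ C := by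
  intro n
  induction n with
  | zero => exact hHC
  | succ n ih => exact sstep_le ih fun v => (secSG_mono' ih v).trans (hC v)

theorem ssK_le {H C : Subgroup (AutT d)} (hHC : H ≤ C) (hC : ∀ v, secSG d C v ≤ C) :
    ssK d H ≤ C :=
  iSup_le (sschain_le hHC hC)

theorem le_ssK (H : Subgroup (AutT d)) : H ≤ ssK d H := le_iSup (sschain d H) 0

theorem isSelfSimilar_ssK (H : Subgroup (AutT d)) : IsSelfSimilar d (ssK d H) := by
  intro v x hx
  obtain ⟨g, hgK, hgs, rfl⟩ := mem_secSG'.mp hx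
  obtain ⟨n, hn⟩ := mem_ssK.mp hgK
  refine mem_ssK.mpr ⟨n + 1, ?_⟩
  exact secSG_le_sstep _ v (mem_secSG'.mpr ⟨g, hn, hgs, rfl⟩)

/-- Conjugation-stability of a subgroup under a larger subgroup. -/
def ConjStable (G A : Subgroup (AutT d)) : Prop :=
  ∀ g ∈ G, ∀ a ∈ A, g * a * g⁻¹ ∈ A

theorem conjStable_sstep {G A : Subgroup (AutT d)} (hG : IsFractal d G) (hAG : A ≤ G)
    (hA : ConjStable G A) : ConjStable G (sstep d A) := by
  intro g hg a ha
  have key : sstep d A ≤ (sstep d A).comap (MulAut.conj g).toMonoidHom := by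
    apply sstep_le
    · intro x hx
      simp only [Subgroup.mem_comap, MulEquiv.coe_toMonoidHom, MulAut.conj_apply]
      exact le_sstep A (hA g hg x hx)
    · intro v x hx
      obtain ⟨b, hbA, hbs, rfl⟩ := mem_secSG'.mp hx
      obtain ⟨w, hwG, hws, hsec⟩ := exists_sec_lift hG v hg
      simp only [Subgroup.mem_comap, MulEquiv.coe_toMonoidHom, MulAut.conj_apply]
      have hcalc : g * sec b v * g⁻¹ = sec (w * b * w⁻¹) v := by
        rw [sec_conj' hws hbs, hsec]
      rw [hcalc]
      exact secSG_le_sstep A v (mem_secSG'.mpr ⟨w * b * w⁻¹, hA w hwG b hbA,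
        mul_mem (mul_mem hws hbs) (inv_mem hws), rfl⟩)
  simpa using key ha

theorem conjStable_sschain {G H : Subgroup (AutT d)} (hG : IsFractal d G) (hHG : H ≤ G)
    (hH : ConjStable G H) (n : ℕ) :
    ConjStable G (sschain d H n) ∧ sschain d H n ≤ G := by
  induction n with
  | zero => exact ⟨hH, hHG⟩
  | succ n ih =>
    refine ⟨conjStable_sstep hG ih.2 ih.1, ?_⟩
    exact sstep_le ih.2 fun v => (secSG_mono' ih.2 v).trans (le_of_eq (hG v))

theorem conjStable_ssK {G H : Subgroup (AutT d)} (hG : IsFractal d G) (hHG : H ≤ G)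
    (hH : ConjStable G H) : ConjStable G (ssK d H) := by
  intro g hg a ha
  obtain ⟨n, hn⟩ := mem_ssK.mp ha
  exact mem_ssK.mpr ⟨n, (conjStable_sschain hG hHG hH n).1 g hg a hn⟩

/-! ### Topological lemmas -/

theorem isOpen_stabT (v : Vertex d) : IsOpen ((stabT d v : Subgroup (AutT d)) : Set (AutT d)) := by
  have h : ((stabT d v : Subgroup (AutT d)) : Set (AutT d))
      = (fun g : AutT d => g.toPerm v) ⁻¹' {v} := by
    ext g
    simp only [Set.mem_preimage, Set.mem_singleton_iff]
    rfl
  rw [h]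
  exact (isOpen_discrete _).preimage (continuous_ev v)

theorem continuous_sec_at (v : Vertex d) : Continuous fun g : AutT d => sec g v := by
  apply continuous_induced_rng.2
  show Continuous fun g : AutT d => ((sec g v).toPerm : Vertex d → Vertex d)
  apply continuous_pi
  intro u
  show Continuous fun g : AutT d => (g.toPerm (v ++ u)).drop v.length
  exact continuous_of_discreteTopology.comp (continuous_ev (v ++ u))

theorem fix_of_levelStab (hd : 2 ≤ d) {g : AutT d} {n : ℕ} (hg : g ∈ levelStab d n)
    {v : Vertex d} (hv : v.length ≤ n) : g.toPerm v = v := by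
  set u : Vertex d := List.replicate (n - v.length) ⟨0, by omega⟩ with hu
  have hlen : (v ++ u).length = n := by
    simp only [List.length_append, hu, List.length_replicate]
    omega
  have h1 : g.toPerm (v ++ u) = v ++ u := hg _ hlen
  have h2 := take_apply g v u
  rw [h1] at h2
  rw [← h2, List.take_left]

theorem exists_level_le (hd : 2 ≤ d) {G H : Subgroup (AutT d)}
    (hHopen : IsOpen ((H.subgroupOf G) : Set G)) :
    ∃ n : ℕ, ∀ g ∈ G, g ∈ levelStab d n → g ∈ H := by
  have hind : IsInducing (fun g : G => ((g : AutT d).toPerm : Vertex d → Vertex d)) := by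
    have h1 : IsInducing (fun g : AutT d => (g.toPerm : Vertex d → Vertex d)) := ⟨rfl⟩
    exact h1.comp IsInducing.subtypeVal
  obtain ⟨u, hu, hus⟩ := hind.isOpen_iff.mp hHopen
  rw [isOpen_pi_iff] at hu
  have h1u : (fun w => ((1 : G) : AutT d).toPerm w) ∈ u := by
    have h1s : (1 : G) ∈ ((H.subgroupOf G) : Set G) := (H.subgroupOf G).one_mem
    rw [← hus] at h1s
    exact h1s
  obtain ⟨I, U, hIU, hpi⟩ := hu _ h1u
  refine ⟨I.sup List.length, fun g hgG hglev => ?_⟩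
  have hmem : (⟨g, hgG⟩ : G) ∈ ((H.subgroupOf G) : Set G) := by
    rw [← hus]
    apply hpi
    intro w hw
    have hfix : g.toPerm w = w := fix_of_levelStab hd hglev (Finset.le_sup hw)
    have h2 := (hIU w hw).2
    show g.toPerm w ∈ U w
    rw [hfix]
    exact h2
  exact Subgroup.mem_subgroupOf.mp hmem

theorem torsion_of_open (hd : 2 ≤ d) {G H : Subgroup (AutT d)} (hHG : H ≤ G)
    (hHopen : IsOpen ((H.subgroupOf G) : Set G))
    (hHtorsion : ∀ h ∈ H, IsOfFinOrder h) :
    ∀ j ∈ G, IsOfFinOrder j := by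
  obtain ⟨n, hn⟩ := exists_level_le hd hHopen
  intro j hj
  haveI : Finite {w : Vertex d // w.length = n} :=
    inferInstanceAs (Finite (List.Vector (Fin d) n))
  have hpred : ∀ w : Vertex d, w.length = n ↔ (j.toPerm w).length = n := by
    intro w
    rw [length_apply]
  set p : Equiv.Perm {w : Vertex d // w.length = n} :=
    Equiv.Perm.subtypePerm j.toPerm (fun w => (hpred w).symm) with hp
  have hm : 0 < orderOf p := orderOf_pos p
  have hpm : p ^ orderOf p = 1 := pow_orderOf_eq_one p
  set m := orderOf p with hmdef
  have hfix : ∀ v : Vertex d, v.length = n → (j.toPerm ^ m) v = v := by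
    intro v hv
    rw [hp, Equiv.Perm.subtypePerm_pow] at hpm
    have h3 := congrArg (fun q : Equiv.Perm {w : Vertex d // w.length = n} => (q ⟨v, hv⟩ : {w : Vertex d // w.length = n})) hpm
    simpa [Equiv.Perm.subtypePerm_apply, Subtype.ext_iff] using h3
  have hcoe : ∀ w : Vertex d, (j ^ m).toPerm w = (j.toPerm ^ m) w := by
    intro w
    have : (j ^ m).toPerm = j.toPerm ^ m := SubmonoidClass.coe_pow j m
    rw [this]
  have hlev : j ^ m ∈ levelStab d n := by
    intro v hv
    rw [show (j ^ m).toPerm v = (j.toPerm ^ m) v from hcoe v]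
    exact hfix v hv
  have hjm : j ^ m ∈ H := hn _ (pow_mem hj m) hlev
  exact (hHtorsion _ hjm).of_pow hm.ne'

end TreeDyn

namespace TreeDyn

open AutT

/-- **Open normal torsion subgroups are self-similarity-closed.**
Let `d ≥ 2` and let `G` be a closed fractal subgroup of `Aut T_d`.  If `H` is an open
normal subgroup of `G` that is torsion (every element has finite order), then the
self-similar closure of `H` in `G` is an open, normal, torsion subgroup of `G`. -/
theorem torsion_selfSimilarClosure (d : ℕ) (hd : 2 ≤ d)
    (G : Subgroup (AutT d)) (hGclosed : IsClosed (G : Set (AutT d)))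
    (hGfractal : IsFractal d G)
    (H : Subgroup (AutT d)) (hHG : H ≤ G)
    (hHopen : IsOpen ((H.subgroupOf G) : Set G))
    (hHnormal : (H.subgroupOf G).Normal)
    (hHtorsion : ∀ h ∈ H, IsOfFinOrder h) :
    ∀ J : Subgroup (AutT d), IsSelfSimilarClosure d G H J →
      IsOpen ((J.subgroupOf G) : Set G) ∧ (J.subgroupOf G).Normal ∧
        ∀ j ∈ J, IsOfFinOrder j := by
  rintro J ⟨hHJ, hJG, hJclosed, hJss, hmin⟩
  -- openness
  have hopen : IsOpen ((J.subgroupOf G) : Set G) :=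
    Subgroup.isOpen_mono (Subgroup.comap_mono hHJ) hHopen
  -- torsion (the whole of G is torsion)
  have htorG : ∀ j ∈ G, IsOfFinOrder j := torsion_of_open hd hHG hHopen hHtorsion
  -- the abstract self-similar closure and its topological closure
  set Kb : Subgroup (AutT d) := ssK d H with hKb
  have hKbG : Kb ≤ G := ssK_le hHG fun v => le_of_eq (hGfractal v)
  have hHconj : ConjStable G H := by
    intro g hg a ha
    have h := hHnormal.conj_mem ⟨a, hHG ha⟩ (Subgroup.mem_subgroupOf.mpr ha) ⟨g, hg⟩
    exact Subgroup.mem_subgroupOf.mp h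
  have hKbconj : ConjStable G Kb := conjStable_ssK hGfractal hHG hHconj
  set J0 : Subgroup (AutT d) := Kb.topologicalClosure with hJ0
  have hJ0G : J0 ≤ G := Subgroup.topologicalClosure_minimal Kb hKbG hGclosed
  have hHJ0 : H ≤ J0 := (le_ssK H).trans Kb.le_topologicalClosure
  have hJ0closed : IsClosed ((J0 : Subgroup (AutT d)) : Set (AutT d)) :=
    Subgroup.isClosed_topologicalClosure Kb
  -- self-similarity of the closure
  have hJ0ss : IsSelfSimilar d J0 := by
    intro v x hx
    obtain ⟨g, hgJ0, hgs, rfl⟩ := mem_secSG'.mp hx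
    have hgJ0' : g ∈ closure (Kb : Set (AutT d)) := hgJ0
    have h1 : g ∈ closure ((Kb : Set (AutT d)) ∩ (stabT d v : Set (AutT d))) := by
      have h := (isOpen_stabT v).inter_closure
        (t := (Kb : Set (AutT d))) ⟨hgs, hgJ0'⟩
      exact closure_mono (by intro y hy; exact ⟨hy.2, hy.1⟩) h
    have h2 : sec g v ∈ closure ((fun z : AutT d => sec z v) ''
        ((Kb : Set (AutT d)) ∩ (stabT d v : Set (AutT d)))) :=
      image_closure_subset_closure_image (continuous_sec_at v) ⟨g, h1, rfl⟩
    have h3 : ((fun z : AutT d => sec z v) ''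
        ((Kb : Set (AutT d)) ∩ (stabT d v : Set (AutT d)))) ⊆ (Kb : Set (AutT d)) := by
      rintro _ ⟨a, ⟨haK, has⟩, rfl⟩
      exact isSelfSimilar_ssK H v (mem_secSG'.mpr ⟨a, haK, has, rfl⟩)
    exact closure_mono h3 h2
  -- conjugation stability of the closure
  have hJ0conj : ConjStable G J0 := by
    intro g hg a ha
    have hc : Continuous fun x : AutT d => g * x * g⁻¹ :=
      (continuous_mul_left g).comp (continuous_mul_right g⁻¹)
    have ha' : a ∈ closure (Kb : Set (AutT d)) := ha
    have h1 : g * a * g⁻¹ ∈ closure ((fun x : AutT d => g * x * g⁻¹) ''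
        (Kb : Set (AutT d))) :=
      image_closure_subset_closure_image hc ⟨a, ha', rfl⟩
    have h2 : ((fun x : AutT d => g * x * g⁻¹) '' (Kb : Set (AutT d)))
        ⊆ (Kb : Set (AutT d)) := by
      rintro _ ⟨b, hb, rfl⟩
      exact hKbconj g hg b hb
    exact closure_mono h2 h1
  -- J equals the closure J0
  have hJJ0 : J ≤ J0 := hmin J0 hHJ0 hJ0G hJ0closed hJ0ss
  have hKbJ : Kb ≤ J := ssK_le hHJ hJss
  have hJ0J : J0 ≤ J := Subgroup.topologicalClosure_minimal Kb hKbJ hJclosed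
  have hJeq : J = J0 := le_antisymm hJJ0 hJ0J
  refine ⟨hopen, ?_, fun j hj => htorG j (hJG hj)⟩
  constructor
  intro x hx g
  rw [Subgroup.mem_subgroupOf] at hx ⊢
  have hx0 : (x : AutT d) ∈ J0 := hJeq ▸ hx
  have h := hJ0conj (g : AutT d) g.2 (x : AutT d) hx0
  have hcoe : ((g * x * g⁻¹ : G) : AutT d) = (g : AutT d) * (x : AutT d) * (g : AutT d)⁻¹ := rfl
  rw [hcoe, hJeq]
  exact h

end TreeDyn
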